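/- arXiv:2206.08499 — 9 statements merged into one kernel-verified Lean document; each statement's English description precedes it below -/
import Mathlib

section
/- Let A be a finite nonempty set, θ₀ ∈ ℝⁿ, and q : ℝⁿ → A → ℝ with θ ↦ q θ u differentiable at θ₀ for every u ∈ A. Let π_θ be the softmax policy of q and let H(θ) = − Σ_{u ∈ A} π_θ(u) log π_θ(u) denote its Shannon entropy. Then H is differentiable at θ₀ and ∇_θ H(θ₀) = − Σ_{u ∈ A} q θ₀ u · ∇_θ π_θ(u)|_{θ=θ₀}; equivalently, ∇_θ H(θ₀) + Σ_{u ∈ A} q θ₀ u · ∇_θ π_θ(u)|_{θ=θ₀} = 0. -/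
/-- The entropy of the softmax policy is differentiable and its gradient equals
minus the "stop-gradient" sum `Σ_u q θ₀ u • ∇_θ π_θ(u)|_{θ₀}`; equivalently the
two add up to zero. -/
theorem softmax_entropy_gradient
    {n : ℕ} {A : Type*} [Fintype A] [Nonempty A]
    (θ₀ : EuclideanSpace ℝ (Fin n))
    (q : EuclideanSpace ℝ (Fin n) → A → ℝ)
    (hq : ∀ u : A, DifferentiableAt ℝ (fun θ => q θ u) θ₀)
    (π : EuclideanSpace ℝ (Fin n) → A → ℝ)
    (hπ : ∀ θ (a : A), π θ a = Real.exp (q θ a) / ∑ u : A, Real.exp (q θ u))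
    (H : EuclideanSpace ℝ (Fin n) → ℝ)
    (hH : ∀ θ, H θ = -∑ u : A, π θ u * Real.log (π θ u)) :
    DifferentiableAt ℝ H θ₀ ∧
    gradient H θ₀ = -∑ u : A, q θ₀ u • gradient (fun θ => π θ u) θ₀ ∧
    gradient H θ₀ + ∑ u : A, q θ₀ u • gradient (fun θ => π θ u) θ₀ = 0 := by
  set Z : EuclideanSpace ℝ (Fin n) → ℝ := fun θ => ∑ u : A, Real.exp (q θ u) with hZdef
  have hZpos : ∀ θ, 0 < Z θ := fun θ =>
    Finset.sum_pos (fun u _ => Real.exp_pos _) Finset.univ_nonempty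
  have hπfun : ∀ u : A, (fun θ => π θ u) = fun θ => Real.exp (q θ u) / Z θ := by
    intro u; funext θ; exact hπ θ u
  have hπdiff : ∀ u : A, DifferentiableAt ℝ (fun θ => π θ u) θ₀ := by
    intro u
    rw [hπfun u]
    simp only [div_eq_mul_inv]
    exact ((hq u).hasFDerivAt.exp).differentiableAt.mul
      ((DifferentiableAt.fun_sum fun u _ =>
        ((hq u).hasFDerivAt.exp).differentiableAt).inv (ne_of_gt (hZpos θ₀)))
  have hsum1 : ∀ θ, ∑ u : A, π θ u = 1 := by
    intro θ
    simp only [hπ]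
    rw [← Finset.sum_div, div_self (ne_of_gt (hZpos θ))]
  have hlogπ : ∀ θ (u : A), Real.log (π θ u) = q θ u - Real.log (Z θ) := by
    intro θ u
    rw [hπ, Real.log_div (Real.exp_ne_zero _) (ne_of_gt (hZpos θ)), Real.log_exp]
  have hHeq : H = fun θ => Real.log (Z θ) - ∑ u : A, π θ u * q θ u := by
    funext θ
    rw [hH]
    have : ∑ u : A, π θ u * Real.log (π θ u)
        = (∑ u : A, π θ u * q θ u) - (∑ u : A, π θ u) * Real.log (Z θ) := by
      rw [Finset.sum_mul, ← Finset.sum_sub_distrib]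
      exact Finset.sum_congr rfl fun u _ => by rw [hlogπ]; ring
    rw [this, hsum1]; ring
  -- derivatives
  set D : A → (EuclideanSpace ℝ (Fin n) →L[ℝ] ℝ) := fun u => fderiv ℝ (fun θ => q θ u) θ₀ with hD
  set P : A → (EuclideanSpace ℝ (Fin n) →L[ℝ] ℝ) := fun u => fderiv ℝ (fun θ => π θ u) θ₀ with hP
  have hZ' : HasFDerivAt Z (∑ u : A, Real.exp (q θ₀ u) • D u) θ₀ :=
    HasFDerivAt.fun_sum fun u _ => ((hq u).hasFDerivAt).exp
  have hlogZ' : HasFDerivAt (fun θ => Real.log (Z θ))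
      ((Z θ₀)⁻¹ • ∑ u : A, Real.exp (q θ₀ u) • D u) θ₀ :=
    hZ'.log (ne_of_gt (hZpos θ₀))
  have hinvsmul : ((Z θ₀)⁻¹ • ∑ u : A, Real.exp (q θ₀ u) • D u)
      = ∑ u : A, π θ₀ u • D u := by
    rw [Finset.smul_sum]
    exact Finset.sum_congr rfl fun u _ => by
      rw [smul_smul, hπ, div_eq_inv_mul]
  have hsum' : HasFDerivAt (fun θ => ∑ u : A, π θ u * q θ u)
      (∑ u : A, (π θ₀ u • D u + q θ₀ u • P u)) θ₀ :=
    HasFDerivAt.fun_sum fun u _ => ((hπdiff u).hasFDerivAt).mul ((hq u).hasFDerivAt)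
  have hHderiv : HasFDerivAt H (-∑ u : A, q θ₀ u • P u) θ₀ := by
    rw [hHeq]
    have := hlogZ'.fun_sub hsum'
    rw [hinvsmul] at this
    refine this.congr_fderiv ?_
    rw [Finset.sum_add_distrib]
    abel
  have hgrad : gradient H θ₀ = -∑ u : A, q θ₀ u • gradient (fun θ => π θ u) θ₀ := by
    have h1 : gradient H θ₀ =
        (InnerProductSpace.toDual ℝ (EuclideanSpace ℝ (Fin n))).symm
          (-∑ u : A, q θ₀ u • P u) := by
      rw [gradient, hHderiv.fderiv]
    rw [h1, map_neg, map_sum]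
    congr 1
    refine Finset.sum_congr rfl fun u _ => ?_
    rw [map_smul]
    rfl
  exact ⟨hHderiv.differentiableAt, hgrad, by rw [hgrad]; simp⟩
end

section
/- (Policy Gradient with Policy Baseline identity.) Let S and A be finite nonempty sets, d : S → ℝ a probability mass function on S, T̂ : S × A → ℝ a fixed target function, θ₀ ∈ ℝⁿ, and q : ℝⁿ → S → A → ℝ with θ ↦ q θ s a differentiable at θ₀ for all (s,a). For each s let π_θ(a|s) be the softmax policy of a ↦ q θ s a and let H_s(θ) = − Σ_a π_θ(a|s) log π_θ(a|s). Then Σ_{s,a} d(s) π_{θ₀}(a|s) · T̂(s,a) · ∇_θ log π_θ(a|s)|_{θ₀} = Σ_{s,a} d(s) π_{θ₀}(a|s) · [ (T̂(s,a) − q θ₀ s a) · ∇_θ log π_θ(a|s)|_{θ₀} − ∇_θ H_s(θ₀) ]. -/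
/-- Policy Gradient with Policy Baseline (PGPB) identity: the expectation of the
PGPB estimator under the on-policy distribution equals the expectation of
`T̂(s,a) • ∇ log π_θ(a|s)`. -/
theorem pgpb_unbiased
    {n : ℕ} {S A : Type*} [Fintype S] [Fintype A] [Nonempty S] [Nonempty A]
    (θ₀ : EuclideanSpace ℝ (Fin n))
    (d : S → ℝ) (hd0 : ∀ s, 0 ≤ d s) (hd1 : ∑ s : S, d s = 1)
    (That : S × A → ℝ)
    (q : EuclideanSpace ℝ (Fin n) → S → A → ℝ)
    (hq : ∀ (s : S) (a : A), DifferentiableAt ℝ (fun θ => q θ s a) θ₀)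
    (π : EuclideanSpace ℝ (Fin n) → S → A → ℝ)
    (hπ : ∀ θ (s : S) (a : A),
      π θ s a = Real.exp (q θ s a) / ∑ u : A, Real.exp (q θ s u))
    (H : S → EuclideanSpace ℝ (Fin n) → ℝ)
    (hH : ∀ (s : S) θ, H s θ = -∑ a : A, π θ s a * Real.log (π θ s a)) :
    ∑ s : S, ∑ a : A,
      (d s * π θ₀ s a * That (s, a)) • gradient (fun θ => Real.log (π θ s a)) θ₀ =
    ∑ s : S, ∑ a : A,
      (d s * π θ₀ s a) •
        ((That (s, a) - q θ₀ s a) • gradient (fun θ => Real.log (π θ s a)) θ₀ -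
          gradient (H s) θ₀) := by
  classical
  refine Finset.sum_congr rfl (fun s _ => ?_)
  -- notation
  set Z : EuclideanSpace ℝ (Fin n) → ℝ := fun θ => ∑ u : A, Real.exp (q θ s u) with hZ
  have hZpos : ∀ θ, 0 < Z θ := fun θ =>
    Finset.sum_pos (fun u _ => Real.exp_pos _) Finset.univ_nonempty
  have hπpos : ∀ θ a, 0 < π θ s a := fun θ a => by
    rw [hπ]; exact div_pos (Real.exp_pos _) (hZpos θ)
  -- derivatives of q
  set D : A → (EuclideanSpace ℝ (Fin n) →L[ℝ] ℝ) := fun a => fderiv ℝ (fun θ => q θ s a) θ₀ with hDdef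
  have hD : ∀ a, HasFDerivAt (fun θ => q θ s a) (D a) θ₀ := fun a =>
    (hq s a).hasFDerivAt
  have hZ' : HasFDerivAt Z (∑ u : A, Real.exp (q θ₀ s u) • D u) θ₀ :=
    HasFDerivAt.fun_sum (fun u _ => (hD u).exp)
  set L0 : EuclideanSpace ℝ (Fin n) →L[ℝ] ℝ := (Z θ₀)⁻¹ • ∑ u : A, Real.exp (q θ₀ s u) • D u with hL0def
  have hlogZ : HasFDerivAt (fun θ => Real.log (Z θ)) L0 θ₀ :=
    hZ'.log (ne_of_gt (hZpos θ₀))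
  set L : A → (EuclideanSpace ℝ (Fin n) →L[ℝ] ℝ) := fun a => D a - L0 with hLdef
  -- log π
  have hlogπ_eq : ∀ a, (fun θ => Real.log (π θ s a))
      = fun θ => q θ s a - Real.log (Z θ) := by
    intro a; funext θ
    rw [hπ, Real.log_div (Real.exp_ne_zero _) (ne_of_gt (hZpos θ)), Real.log_exp]
  have hlogπ : ∀ a, HasFDerivAt (fun θ => Real.log (π θ s a)) (L a) θ₀ := by
    intro a; rw [hlogπ_eq a]; exact (hD a).sub hlogZ
  -- π
  have hπ' : ∀ a, HasFDerivAt (fun θ => π θ s a) (π θ₀ s a • L a) θ₀ := by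
    intro a
    have heq : (fun θ => π θ s a) = fun θ => Real.exp (q θ s a - Real.log (Z θ)) := by
      funext θ
      rw [Real.exp_sub, Real.exp_log (hZpos θ), hπ]
    have h := ((hD a).fun_sub hlogZ).exp
    rw [← heq] at h
    have hv : Real.exp (q θ₀ s a - Real.log (Z θ₀)) = π θ₀ s a := by
      rw [Real.exp_sub, Real.exp_log (hZpos θ₀), hπ]
    rwa [hv] at h
  -- key facts
  have hsum1 : ∑ a : A, π θ₀ s a = 1 := by
    simp only [hπ]
    rw [← Finset.sum_div, div_self (ne_of_gt (hZpos θ₀))]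
  have hL0eq : L0 = ∑ u : A, π θ₀ s u • D u := by
    rw [hL0def, Finset.smul_sum]
    refine Finset.sum_congr rfl (fun u _ => ?_)
    rw [smul_smul, hπ]
    simp only [hZ]
    ring_nf
  have hLzero : ∑ a : A, π θ₀ s a • L a = 0 := by
    simp only [hLdef, smul_sub]
    rw [Finset.sum_sub_distrib, ← Finset.sum_smul, hsum1, one_smul, hL0eq, sub_self]
  -- derivative of H
  have hHderiv : HasFDerivAt (H s)
      (-∑ a : A, (π θ₀ s a * q θ₀ s a) • L a) θ₀ := by
    have hterm : ∀ a : A, HasFDerivAt (fun θ => π θ s a * Real.log (π θ s a))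
        (π θ₀ s a • L a + Real.log (π θ₀ s a) • (π θ₀ s a • L a)) θ₀ :=
      fun a => (hπ' a).mul (hlogπ a)
    have hHfun : H s = fun θ => -∑ a : A, π θ s a * Real.log (π θ s a) :=
      funext (hH s)
    have h := (HasFDerivAt.fun_sum (fun a (_ : a ∈ Finset.univ) => hterm a)).fun_neg
    rw [← hHfun] at h
    refine h.congr_fderiv (Eq.symm ?_)
    rw [neg_inj]
    have hlogval : ∀ a : A, Real.log (π θ₀ s a) = q θ₀ s a - Real.log (Z θ₀) := by
      intro a
      have := congrFun (hlogπ_eq a) θ₀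
      simpa using this
    have : ∀ a : A, (π θ₀ s a * q θ₀ s a) • L a
        = π θ₀ s a • L a + Real.log (π θ₀ s a) • (π θ₀ s a • L a)
          + ((Real.log (Z θ₀) - 1) * π θ₀ s a) • L a := by
      intro a
      rw [hlogval a, smul_smul]
      module
    rw [Finset.sum_congr rfl (fun a _ => this a), Finset.sum_add_distrib]
    have hz : ∑ a : A, ((Real.log (Z θ₀) - 1) * π θ₀ s a) • L a = 0 := by
      have : ∀ a : A, ((Real.log (Z θ₀) - 1) * π θ₀ s a) • L a
          = (Real.log (Z θ₀) - 1) • (π θ₀ s a • L a) := by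
        intro a; rw [smul_smul]
      rw [Finset.sum_congr rfl (fun a _ => this a), ← Finset.smul_sum, hLzero,
        smul_zero]
    rw [hz, add_zero]
  -- gradient of H
  have hgradH : gradient (H s) θ₀
      = -∑ a : A, (π θ₀ s a * q θ₀ s a) •
          gradient (fun θ => Real.log (π θ s a)) θ₀ := by
    have h1 : fderiv ℝ (H s) θ₀ = -∑ a : A, (π θ₀ s a * q θ₀ s a) • L a :=
      hHderiv.fderiv
    have h2 : ∀ a : A, fderiv ℝ (fun θ => Real.log (π θ s a)) θ₀ = L a :=
      fun a => (hlogπ a).fderiv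
    simp only [gradient, h1, map_neg, map_sum, map_smul, h2]
  rw [hgradH]
  -- final algebra
  have hexp : ∀ a : A,
      (d s * π θ₀ s a) •
        ((That (s, a) - q θ₀ s a) • gradient (fun θ => Real.log (π θ s a)) θ₀ -
          (-∑ b : A, (π θ₀ s b * q θ₀ s b) •
            gradient (fun θ => Real.log (π θ s b)) θ₀))
      = (d s * π θ₀ s a * That (s, a)) • gradient (fun θ => Real.log (π θ s a)) θ₀
        - (d s * π θ₀ s a * q θ₀ s a) • gradient (fun θ => Real.log (π θ s a)) θ₀
        + (d s * π θ₀ s a) • (∑ b : A, (π θ₀ s b * q θ₀ s b) •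
            gradient (fun θ => Real.log (π θ s b)) θ₀) := by
    intro a
    rw [sub_neg_eq_add, smul_add, smul_smul, mul_sub, sub_smul]
  rw [Finset.sum_congr rfl (fun a _ => hexp a), Finset.sum_add_distrib,
    Finset.sum_sub_distrib]
  have hlast : ∑ a : A, (d s * π θ₀ s a) • (∑ b : A, (π θ₀ s b * q θ₀ s b) •
      gradient (fun θ => Real.log (π θ s b)) θ₀)
      = ∑ b : A, (d s * π θ₀ s b * q θ₀ s b) •
          gradient (fun θ => Real.log (π θ s b)) θ₀ := by
    rw [← Finset.sum_smul, ← Finset.mul_sum, hsum1, mul_one, Finset.smul_sum]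
    refine Finset.sum_congr rfl (fun b _ => ?_)
    rw [smul_smul, mul_assoc]
  rw [hlast, sub_add_cancel]
end

section
/- (Unbiased MVE semi-gradient.) Let S and A be finite nonempty sets, d : S → ℝ≥0 fixed nonnegative state weights, T̂ : S × A → ℝ a fixed target, θ₀ ∈ ℝⁿ, and q : ℝⁿ → S → A → ℝ with θ ↦ q θ s a differentiable at θ₀ for all (s,a). Let π̂(a|s) = π_{θ₀}(a|s) be the softmax policy of q θ₀ s, held fixed, and define V(θ) = (1/2) Σ_s d(s) [ Σ_a π̂(a|s)(T̂(s,a) − q θ s a)² − ( Σ_a π̂(a|s)(T̂(s,a) − q θ s a) )² ]. Then V is differentiable at θ₀ and −∇_θ V(θ₀) = Σ_{s,a} d(s) π_{θ₀}(a|s) (T̂(s,a) − q θ₀ s a) · ∇_θ log π_θ(a|s)|_{θ₀}. -/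
/-- Unbiased MVE semi-gradient: the (semi-)gradient of the mean-variance-error
objective (with a stop-gradient sampling policy `π̂ = π_{θ₀}`) is the weighted sum
of the per-sample estimators `(T̂(s,a) − q_θ(s,a)) • ∇ log π_θ(a|s)`. -/
theorem mve_semi_gradient
    {n : ℕ} {S A : Type*} [Fintype S] [Fintype A] [Nonempty S] [Nonempty A]
    (θ₀ : EuclideanSpace ℝ (Fin n))
    (d : S → ℝ) (hd : ∀ s, 0 ≤ d s)
    (That : S × A → ℝ)
    (q : EuclideanSpace ℝ (Fin n) → S → A → ℝ)
    (hq : ∀ (s : S) (a : A), DifferentiableAt ℝ (fun θ => q θ s a) θ₀)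
    (π : EuclideanSpace ℝ (Fin n) → S → A → ℝ)
    (hπ : ∀ θ (s : S) (a : A),
      π θ s a = Real.exp (q θ s a) / ∑ u : A, Real.exp (q θ s u))
    (V : EuclideanSpace ℝ (Fin n) → ℝ)
    (hV : ∀ θ, V θ = (1 / 2) * ∑ s : S, d s *
      ((∑ a : A, π θ₀ s a * (That (s, a) - q θ s a) ^ 2) -
        (∑ a : A, π θ₀ s a * (That (s, a) - q θ s a)) ^ 2)) :
    DifferentiableAt ℝ V θ₀ ∧
    -gradient V θ₀ = ∑ s : S, ∑ a : A,
      (d s * π θ₀ s a * (That (s, a) - q θ₀ s a)) •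
        gradient (fun θ => Real.log (π θ s a)) θ₀ := by
  classical
  have hsumpos : ∀ θ (s : S), 0 < ∑ u : A, Real.exp (q θ s u) := fun θ s =>
    Finset.sum_pos (fun u _ => Real.exp_pos _) Finset.univ_nonempty
  set L : S → A → (EuclideanSpace ℝ (Fin n) →L[ℝ] ℝ) :=
    fun s a => fderiv ℝ (fun θ => q θ s a) θ₀ with hLdef
  have hL : ∀ s a, HasFDerivAt (fun θ => q θ s a) (L s a) θ₀ :=
    fun s a => (hq s a).hasFDerivAt
  set N : S → (EuclideanSpace ℝ (Fin n) →L[ℝ] ℝ) :=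
    fun s => ∑ u : A, π θ₀ s u • L s u with hNdef
  -- derivative of the log-sum-exp
  have hlogsum : ∀ s, HasFDerivAt
      (fun θ => Real.log (∑ u : A, Real.exp (q θ s u))) (N s) θ₀ := by
    intro s
    have hsum : HasFDerivAt (fun θ => ∑ u : A, Real.exp (q θ s u))
        (∑ u : A, Real.exp (q θ₀ s u) • L s u) θ₀ :=
      HasFDerivAt.fun_sum (fun u _ => (hL s u).exp)
    have h := hsum.log (ne_of_gt (hsumpos θ₀ s))
    refine h.congr_fderiv ?_
    rw [Finset.smul_sum]
    refine Finset.sum_congr rfl fun u _ => ?_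
    rw [smul_smul, hπ, div_eq_inv_mul]
  -- derivative of log π
  have hlogπ : ∀ s a, HasFDerivAt (fun θ => Real.log (π θ s a))
      (L s a - N s) θ₀ := by
    intro s a
    have hfun : (fun θ => Real.log (π θ s a)) =
        fun θ => q θ s a - Real.log (∑ u : A, Real.exp (q θ s u)) := by
      funext θ
      rw [hπ, Real.log_div (Real.exp_ne_zero _) (ne_of_gt (hsumpos θ s)),
        Real.log_exp]
    rw [hfun]
    exact (hL s a).sub (hlogsum s)
  -- helper: square
  have hsq : ∀ {f : EuclideanSpace ℝ (Fin n) → ℝ}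
      {f' : EuclideanSpace ℝ (Fin n) →L[ℝ] ℝ}, HasFDerivAt f f' θ₀ →
      HasFDerivAt (fun θ => f θ ^ 2) ((2 * f θ₀) • f') θ₀ := by
    intro f f' h
    have h2 := h.fun_mul h
    have e : (2 * f θ₀) • f' = f θ₀ • f' + f θ₀ • f' := by
      rw [two_mul, add_smul]
    rw [e]
    simpa [pow_two] using h2
  -- derivative of the inner pieces
  have hB : ∀ s, HasFDerivAt
      (fun θ => ∑ a : A, π θ₀ s a * (That (s, a) - q θ s a))
      (∑ a : A, π θ₀ s a • (-(L s a))) θ₀ := fun s =>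
    HasFDerivAt.fun_sum fun a _ => ((hL s a).const_sub _).const_mul _
  have hA : ∀ s, HasFDerivAt
      (fun θ => ∑ a : A, π θ₀ s a * (That (s, a) - q θ s a) ^ 2)
      (∑ a : A, π θ₀ s a •
        ((2 * (That (s, a) - q θ₀ s a)) • (-(L s a)))) θ₀ := fun s =>
    HasFDerivAt.fun_sum fun a _ => (hsq ((hL s a).const_sub _)).const_mul _
  have hVfun : V = fun θ => (1 / 2) * ∑ s : S, d s *
      ((∑ a : A, π θ₀ s a * (That (s, a) - q θ s a) ^ 2) -
        (∑ a : A, π θ₀ s a * (That (s, a) - q θ s a)) ^ 2) := funext hV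
  have hVd : HasFDerivAt V ((1 / 2 : ℝ) • ∑ s : S, d s •
      ((∑ a : A, π θ₀ s a • ((2 * (That (s, a) - q θ₀ s a)) • (-(L s a)))) -
        (2 * ∑ a : A, π θ₀ s a * (That (s, a) - q θ₀ s a)) •
          (∑ a : A, π θ₀ s a • (-(L s a))))) θ₀ := by
    rw [hVfun]
    exact (HasFDerivAt.fun_sum fun s _ =>
      ((hA s).sub (hsq (hB s))).const_mul (d s)).const_mul _
  -- the target derivative
  set F : EuclideanSpace ℝ (Fin n) →L[ℝ] ℝ :=
    ∑ s : S, ∑ a : A, (d s * π θ₀ s a * (That (s, a) - q θ₀ s a)) •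
      (L s a - N s) with hFdef
  have hGF : ((1 / 2 : ℝ) • ∑ s : S, d s •
      ((∑ a : A, π θ₀ s a • ((2 * (That (s, a) - q θ₀ s a)) • (-(L s a)))) -
        (2 * ∑ a : A, π θ₀ s a * (That (s, a) - q θ₀ s a)) •
          (∑ a : A, π θ₀ s a • (-(L s a))))) = -F := by
    ext v
    simp only [hFdef, hNdef, ContinuousLinearMap.smul_apply,
      ContinuousLinearMap.sum_apply, ContinuousLinearMap.sub_apply,
      ContinuousLinearMap.neg_apply, smul_eq_mul, Finset.sum_neg_distrib,
      ← Finset.sum_neg_distrib]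
    rw [Finset.mul_sum]
    refine Finset.sum_congr rfl fun s _ => ?_
    have e1 : ∑ a : A, π θ₀ s a * (2 * (That (s, a) - q θ₀ s a) * -L s a v) =
        (-2) * ∑ a : A, π θ₀ s a * (That (s, a) - q θ₀ s a) * L s a v := by
      rw [Finset.mul_sum]; exact Finset.sum_congr rfl fun a _ => by ring
    have e2 : ∑ a : A, π θ₀ s a * -L s a v =
        (-1) * ∑ a : A, π θ₀ s a * L s a v := by
      rw [Finset.mul_sum]; exact Finset.sum_congr rfl fun a _ => by ring
    have e3 : ∑ a : A, d s * π θ₀ s a * (That (s, a) - q θ₀ s a) *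
          (L s a v - ∑ u : A, π θ₀ s u * L s u v) =
        d s * ((∑ a : A, π θ₀ s a * (That (s, a) - q θ₀ s a) * L s a v) -
          (∑ a : A, π θ₀ s a * (That (s, a) - q θ₀ s a)) *
            ∑ u : A, π θ₀ s u * L s u v) := by
      have h1 : ∑ a : A, d s * π θ₀ s a * (That (s, a) - q θ₀ s a) *
            (L s a v - ∑ u : A, π θ₀ s u * L s u v) =
          (∑ a : A, d s * π θ₀ s a * (That (s, a) - q θ₀ s a) * L s a v) -
            (∑ a : A, d s * π θ₀ s a * (That (s, a) - q θ₀ s a)) *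
              ∑ u : A, π θ₀ s u * L s u v := by
        rw [Finset.sum_mul, ← Finset.sum_sub_distrib]
        exact Finset.sum_congr rfl fun a _ => by ring
      have h2 : ∑ a : A, d s * π θ₀ s a * (That (s, a) - q θ₀ s a) * L s a v =
          d s * ∑ a : A, π θ₀ s a * (That (s, a) - q θ₀ s a) * L s a v := by
        rw [Finset.mul_sum]; exact Finset.sum_congr rfl fun a _ => by ring
      have h3 : ∑ a : A, d s * π θ₀ s a * (That (s, a) - q θ₀ s a) =
          d s * ∑ a : A, π θ₀ s a * (That (s, a) - q θ₀ s a) := by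
        rw [Finset.mul_sum]; exact Finset.sum_congr rfl fun a _ => by ring
      rw [h1, h2, h3]; ring
    rw [Finset.sum_neg_distrib, e3, e1, e2]
    ring
  have hVd' : HasFDerivAt V (-F) θ₀ := hGF ▸ hVd
  refine ⟨hVd'.differentiableAt, ?_⟩
  have hgV : gradient V θ₀ = (InnerProductSpace.toDual ℝ _).symm (-F) :=
    (hasFDerivAt_iff_hasGradientAt.mp hVd').gradient
  have hglog : ∀ s a, gradient (fun θ => Real.log (π θ s a)) θ₀ =
      (InnerProductSpace.toDual ℝ _).symm (L s a - N s) := fun s a =>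
    (hasFDerivAt_iff_hasGradientAt.mp (hlogπ s a)).gradient
  rw [hgV, hFdef, map_neg, neg_neg, map_sum]
  refine Finset.sum_congr rfl fun s _ => ?_
  rw [map_sum]
  refine Finset.sum_congr rfl fun a _ => ?_
  rw [map_smul, hglog]
end

section
/- (Explicit form of the PGPB update.) Let A be a finite nonempty set, θ₀ ∈ ℝⁿ, q : ℝⁿ → A → ℝ with θ ↦ q θ a differentiable at θ₀ for all a, π_θ the softmax policy of q, H(θ) = − Σ_u π_θ(u) log π_θ(u), and T̂ : A → ℝ. Then for every a ∈ A, with Δ_R = T̂(a) − q θ₀ a: (T̂(a) − q θ₀ a) ∇_θ log π_θ(a)|_{θ₀} − ∇_θ H(θ₀) = Δ_R ( ∇_θ q θ a |_{θ₀} − Σ_u π_{θ₀}(u) ∇_θ q θ u |_{θ₀} ) + Σ_u q θ₀ u · ∇_θ π_θ(u)|_{θ₀}. -/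
section helpers

open Real

variable {F : Type*} [NormedAddCommGroup F] [InnerProductSpace ℝ F] [CompleteSpace F]
variable {f h : F → ℝ} {g gh : F} {x : F}

private lemma hga_of_fderiv {L : F →L[ℝ] ℝ} (hf : HasFDerivAt f L x)
    (hL : (InnerProductSpace.toDual ℝ F).symm L = g) : HasGradientAt f g x := by
  rw [hasGradientAt_iff_hasFDerivAt, ← hL]
  simpa using hf

private lemma HGA.smul (c : ℝ) (hf : HasGradientAt f g x) :
    HasGradientAt (fun y => c * f y) (c • g) x := by
  rw [hasGradientAt_iff_hasFDerivAt] at hf ⊢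
  simpa [map_smul] using hf.const_mul c

private lemma HGA.add (hf : HasGradientAt f g x) (hh : HasGradientAt h gh x) :
    HasGradientAt (fun y => f y + h y) (g + gh) x := by
  rw [hasGradientAt_iff_hasFDerivAt] at hf hh ⊢
  simpa [map_add] using hf.fun_add hh

private lemma HGA.sub (hf : HasGradientAt f g x) (hh : HasGradientAt h gh x) :
    HasGradientAt (fun y => f y - h y) (g - gh) x := by
  rw [hasGradientAt_iff_hasFDerivAt] at hf hh ⊢
  simpa [map_sub] using hf.fun_sub hh

private lemma HGA.sum {ι : Type*} (s : Finset ι) {f : ι → F → ℝ} {g : ι → F}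
    (hf : ∀ i ∈ s, HasGradientAt (f i) (g i) x) :
    HasGradientAt (fun y => ∑ i ∈ s, f i y) (∑ i ∈ s, g i) x := by
  simp only [hasGradientAt_iff_hasFDerivAt] at hf ⊢
  simpa [map_sum] using HasFDerivAt.fun_sum hf

private lemma HGA.mul (hf : HasGradientAt f g x) (hh : HasGradientAt h gh x) :
    HasGradientAt (fun y => f y * h y) (f x • gh + h x • g) x := by
  rw [hasGradientAt_iff_hasFDerivAt] at hf hh ⊢
  simpa [map_add, map_smul] using hf.fun_mul hh

private lemma HGA.exp (hf : HasGradientAt f g x) :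
    HasGradientAt (fun y => Real.exp (f y)) (Real.exp (f x) • g) x := by
  rw [hasGradientAt_iff_hasFDerivAt] at hf ⊢
  simpa [map_smul, Function.comp_def] using (Real.hasDerivAt_exp (f x)).comp_hasFDerivAt x hf

private lemma HGA.log (hf : HasGradientAt f g x) (hx : f x ≠ 0) :
    HasGradientAt (fun y => Real.log (f y)) ((f x)⁻¹ • g) x := by
  rw [hasGradientAt_iff_hasFDerivAt] at hf ⊢
  simpa [map_smul, Function.comp_def] using (Real.hasDerivAt_log hx).comp_hasFDerivAt x hf

end helpers

/-- Explicit form of the PGPB update in terms of the logits: the PGPB estimator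
`(T̂(a) − q_{θ₀}(a)) • ∇ log π_θ(a) − ∇ H(θ₀)` equals
`Δ_R • (∇ q(a) − Σ_u π_{θ₀}(u) • ∇ q(u)) + Σ_u q θ₀ u • ∇ π_θ(u)`. -/
theorem pgpb_explicit_form
    {n : ℕ} {A : Type*} [Fintype A] [Nonempty A]
    (θ₀ : EuclideanSpace ℝ (Fin n))
    (q : EuclideanSpace ℝ (Fin n) → A → ℝ)
    (hq : ∀ u : A, DifferentiableAt ℝ (fun θ => q θ u) θ₀)
    (π : EuclideanSpace ℝ (Fin n) → A → ℝ)
    (hπ : ∀ θ (a : A), π θ a = Real.exp (q θ a) / ∑ u : A, Real.exp (q θ u))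
    (H : EuclideanSpace ℝ (Fin n) → ℝ)
    (hH : ∀ θ, H θ = -∑ u : A, π θ u * Real.log (π θ u))
    (That : A → ℝ) :
    ∀ a : A,
      (That a - q θ₀ a) • gradient (fun θ => Real.log (π θ a)) θ₀ -
        gradient H θ₀ =
      (That a - q θ₀ a) •
          (gradient (fun θ => q θ a) θ₀ -
            ∑ u : A, π θ₀ u • gradient (fun θ => q θ u) θ₀) +
        ∑ u : A, q θ₀ u • gradient (fun θ => π θ u) θ₀ := by
  intro a
  set S : EuclideanSpace ℝ (Fin n) → ℝ := fun θ => ∑ u : A, Real.exp (q θ u) with hSdef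
  have hSpos : ∀ θ, 0 < S θ := fun θ =>
    Finset.sum_pos (fun u _ => Real.exp_pos _) Finset.univ_nonempty
  set g : A → EuclideanSpace ℝ (Fin n) := fun u => gradient (fun θ => q θ u) θ₀ with hgdef
  have hgu : ∀ u : A, HasGradientAt (fun θ => q θ u) (g u) θ₀ :=
    fun u => (hq u).hasGradientAt
  -- gradient of S
  have hS : HasGradientAt S (∑ u : A, Real.exp (q θ₀ u) • g u) θ₀ :=
    HGA.sum _ (fun u _ => HGA.exp (hgu u))
  -- ∑ π θ₀ u • g u = (S θ₀)⁻¹ • ∑ exp(q θ₀ u) • g u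
  have hπg : ∑ u : A, π θ₀ u • g u = (S θ₀)⁻¹ • ∑ u : A, Real.exp (q θ₀ u) • g u := by
    rw [Finset.smul_sum]
    refine Finset.sum_congr rfl fun u _ => ?_
    rw [hπ, smul_smul, div_eq_inv_mul]
  -- gradient of log S
  have hlogS : HasGradientAt (fun θ => Real.log (S θ)) (∑ u : A, π θ₀ u • g u) θ₀ := by
    rw [hπg]
    exact HGA.log hS (ne_of_gt (hSpos θ₀))
  -- gradient of log π a
  have hlogπ : HasGradientAt (fun θ => Real.log (π θ a))
      (g a - ∑ u : A, π θ₀ u • g u) θ₀ := by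
    have heq : (fun θ => Real.log (π θ a)) = fun θ => q θ a - Real.log (S θ) := by
      funext θ
      rw [hπ, Real.log_div (Real.exp_ne_zero _) (ne_of_gt (hSpos θ)), Real.log_exp]
    rw [heq]
    exact HGA.sub (hgu a) hlogS
  -- π u is differentiable; record its gradient as Gπ u
  have hπdiff : ∀ u : A, DifferentiableAt ℝ (fun θ => π θ u) θ₀ := by
    intro u
    have heq : (fun θ => π θ u) = fun θ => Real.exp (q θ u) * (S θ)⁻¹ := by
      funext θ; rw [hπ θ u, div_eq_mul_inv]
    rw [heq]
    exact ((HGA.exp (hgu u)).differentiableAt).mul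
      (hS.differentiableAt.inv (hSpos θ₀).ne')
  set Gπ : A → EuclideanSpace ℝ (Fin n) := fun u => gradient (fun θ => π θ u) θ₀ with hGπdef
  have hGπu : ∀ u : A, HasGradientAt (fun θ => π θ u) (Gπ u) θ₀ :=
    fun u => (hπdiff u).hasGradientAt
  -- ∑ π θ u = 1
  have hπsum : ∀ θ, ∑ u : A, π θ u = 1 := by
    intro θ
    have : ∑ u : A, π θ u = (∑ u : A, Real.exp (q θ u)) / S θ := by
      rw [Finset.sum_div]
      exact Finset.sum_congr rfl fun u _ => hπ θ u
    rw [this]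
    exact div_self (ne_of_gt (hSpos θ))
  -- H θ = log (S θ) - ∑ π θ u * q θ u
  have hHeq : H = fun θ => Real.log (S θ) - ∑ u : A, π θ u * q θ u := by
    funext θ
    rw [hH]
    have hlogπu : ∀ u : A, Real.log (π θ u) = q θ u - Real.log (S θ) := by
      intro u
      rw [hπ, Real.log_div (Real.exp_ne_zero _) (ne_of_gt (hSpos θ)), Real.log_exp]
    calc -∑ u : A, π θ u * Real.log (π θ u)
        = -∑ u : A, (π θ u * q θ u - π θ u * Real.log (S θ)) := by
          congr 1
          exact Finset.sum_congr rfl fun u _ => by rw [hlogπu u]; ring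
      _ = (∑ u : A, π θ u) * Real.log (S θ) - ∑ u : A, π θ u * q θ u := by
          rw [Finset.sum_sub_distrib, ← Finset.sum_mul]; ring
      _ = Real.log (S θ) - ∑ u : A, π θ u * q θ u := by rw [hπsum θ, one_mul]
  -- gradient of H
  have hHgrad : HasGradientAt H
      ((∑ u : A, π θ₀ u • g u) -
        ∑ u : A, (π θ₀ u • g u + q θ₀ u • Gπ u)) θ₀ := by
    rw [hHeq]
    exact HGA.sub hlogS (HGA.sum _ fun u _ => HGA.mul (hGπu u) (hgu u))
  have hHgrad' : gradient H θ₀ = -∑ u : A, q θ₀ u • Gπ u := by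
    rw [hHgrad.gradient, Finset.sum_add_distrib]
    abel
  rw [hlogπ.gradient, hHgrad']
  simp only [hgdef, hGπdef]
  abel
end

section
/- (PPO surrogate gradient.) Let θ₀ ∈ ℝⁿ, p : ℝⁿ → ℝ differentiable at θ₀ with p(θ₀) > 0, let p_b > 0 be a constant, Â ∈ ℝ, and 0 < ε < 1. Set r(θ) = p(θ)/p_b, Δ_O = log(p(θ₀)/p_b), and define J(θ) = min( r(θ)·Â, clip(r(θ), 1−ε, 1+ε)·Â ), where clip(x,l,u) = max(l, min(x,u)). Suppose r(θ₀) ≠ 1+ε and r(θ₀) ≠ 1−ε. Then J is differentiable at θ₀ and ∇_θ J(θ₀) = τ_ε(Δ_O, Â) · e^{Δ_O} · Â · ∇_θ log p(θ)|_{θ₀}, where τ_ε(x,y) = 1 if (y > 0 and x < log(1+ε)) or (y < 0 and x > log(1−ε)), and τ_ε(x,y) = 0 otherwise. -/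
open Filter Topology

lemma gradient_const_mul' {n : ℕ} (x : EuclideanSpace ℝ (Fin n))
    (p : EuclideanSpace ℝ (Fin n) → ℝ) (hp : DifferentiableAt ℝ p x) (c : ℝ) :
    gradient (fun θ => c * p θ) x = c • gradient p x := by
  unfold gradient
  rw [fderiv_const_mul hp, map_smulₛₗ]
  simp

lemma gradient_log_comp' {n : ℕ} (x : EuclideanSpace ℝ (Fin n))
    (p : EuclideanSpace ℝ (Fin n) → ℝ) (hp : DifferentiableAt ℝ p x) (hp0 : 0 < p x) :
    gradient (fun θ => Real.log (p θ)) x = (p x)⁻¹ • gradient p x := by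
  have hlog : HasFDerivAt (fun θ => Real.log (p θ)) ((p x)⁻¹ • fderiv ℝ p x) x :=
    (Real.hasDerivAt_log hp0.ne').comp_hasFDerivAt x hp.hasFDerivAt
  unfold gradient
  rw [hlog.fderiv, map_smulₛₗ]
  simp

/-- PPO surrogate gradient: away from the clipping kinks, the PPO clipped
surrogate objective is differentiable and its gradient equals
`τ_ε(Δ_O, Â) · e^{Δ_O} · Â • ∇ log p(θ)`. -/
theorem ppo_surrogate_gradient
    {n : ℕ} (θ₀ : EuclideanSpace ℝ (Fin n))
    (p : EuclideanSpace ℝ (Fin n) → ℝ)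
    (hp : DifferentiableAt ℝ p θ₀) (hp0 : 0 < p θ₀)
    (pb : ℝ) (hpb : 0 < pb)
    (Ahat ε : ℝ) (hε0 : 0 < ε) (hε1 : ε < 1)
    (r : EuclideanSpace ℝ (Fin n) → ℝ) (hr : ∀ θ, r θ = p θ / pb)
    (ΔO : ℝ) (hΔO : ΔO = Real.log (p θ₀ / pb))
    (clip : ℝ → ℝ → ℝ → ℝ) (hclip : ∀ x l u, clip x l u = max l (min x u))
    (J : EuclideanSpace ℝ (Fin n) → ℝ)
    (hJ : ∀ θ, J θ = min (r θ * Ahat) (clip (r θ) (1 - ε) (1 + ε) * Ahat))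
    (τ : ℝ → ℝ → ℝ)
    (hτ : ∀ x y, τ x y =
      if (0 < y ∧ x < Real.log (1 + ε)) ∨ (y < 0 ∧ Real.log (1 - ε) < x)
      then 1 else 0)
    (hne1 : r θ₀ ≠ 1 + ε) (hne2 : r θ₀ ≠ 1 - ε) :
    DifferentiableAt ℝ J θ₀ ∧
    gradient J θ₀ =
      (τ ΔO Ahat * Real.exp ΔO * Ahat) •
        gradient (fun θ => Real.log (p θ)) θ₀ := by
  have hrθ : r θ₀ = p θ₀ / pb := hr θ₀
  have hr0 : 0 < r θ₀ := by rw [hrθ]; positivity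
  have hΔO' : ΔO = Real.log (r θ₀) := by rw [hΔO, hrθ]
  have hexp : Real.exp ΔO = r θ₀ := by rw [hΔO']; exact Real.exp_log hr0
  have h1εm : (0:ℝ) < 1 - ε := by linarith
  have h1εp : (0:ℝ) < 1 + ε := by linarith
  have hcont : ContinuousAt r θ₀ := by
    have hreq : r = fun θ => p θ / pb := funext hr
    rw [hreq]; exact hp.continuousAt.div_const pb
  have hgradlog := gradient_log_comp' θ₀ p hp hp0
  -- the "linear" case: J is locally r·Â and τ = 1
  have lin : J =ᶠ[𝓝 θ₀] (fun θ => Ahat / pb * p θ) → τ ΔO Ahat = 1 →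
      DifferentiableAt ℝ J θ₀ ∧
      gradient J θ₀ = (τ ΔO Ahat * Real.exp ΔO * Ahat) •
        gradient (fun θ => Real.log (p θ)) θ₀ := by
    intro hEq hτ1
    have hd : DifferentiableAt ℝ (fun θ => Ahat / pb * p θ) θ₀ := hp.const_mul _
    refine ⟨hd.congr_of_eventuallyEq hEq, ?_⟩
    rw [hEq.gradient_eq, hτ1, hexp, hgradlog, gradient_const_mul' θ₀ p hp, smul_smul]
    congr 1
    rw [hrθ]
    field_simp
  -- the "constant" case: J is locally constant and τ = 0
  have cst : ∀ c : ℝ, J =ᶠ[𝓝 θ₀] (fun _ => c) → τ ΔO Ahat = 0 →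
      DifferentiableAt ℝ J θ₀ ∧
      gradient J θ₀ = (τ ΔO Ahat * Real.exp ΔO * Ahat) •
        gradient (fun θ => Real.log (p θ)) θ₀ := by
    intro c hEq hτ0
    refine ⟨(differentiableAt_const c).congr_of_eventuallyEq hEq, ?_⟩
    rw [hEq.gradient_eq, hτ0]
    simp [gradient_const]
  rcases lt_trichotomy Ahat 0 with hAneg | hA0 | hApos
  · -- Ahat < 0
    rcases hne2.lt_or_gt with hA | hB1
    · -- r θ₀ < 1 - ε : J locally constant (1-ε)·Â
      have hev : ∀ᶠ θ in 𝓝 θ₀, r θ < 1 - ε := hcont.eventually (eventually_lt_nhds hA)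
      have hEq : J =ᶠ[𝓝 θ₀] (fun _ => (1 - ε) * Ahat) := by
        filter_upwards [hev] with θ hθ
        rw [hJ θ, hclip, min_eq_left (by linarith : r θ ≤ 1 + ε),
          max_eq_left (le_of_lt hθ), min_eq_right (by nlinarith)]
      refine cst _ hEq ?_
      rw [hτ]
      have hlog1 : ΔO < Real.log (1 - ε) := by rw [hΔO']; exact Real.log_lt_log hr0 hA
      rw [if_neg]; push_neg
      constructor
      · intro h; linarith
      · intro _; linarith
    · rcases hne1.lt_or_gt with hB2 | hC
      · -- 1 - ε < r θ₀ < 1 + ε : linear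
        have hev1 : ∀ᶠ θ in 𝓝 θ₀, 1 - ε < r θ := hcont.eventually (eventually_gt_nhds hB1)
        have hev2 : ∀ᶠ θ in 𝓝 θ₀, r θ < 1 + ε := hcont.eventually (eventually_lt_nhds hB2)
        have hEq : J =ᶠ[𝓝 θ₀] (fun θ => Ahat / pb * p θ) := by
          filter_upwards [hev1, hev2] with θ hθ1 hθ2
          rw [hJ θ, hclip, min_eq_left (le_of_lt hθ2), max_eq_right (le_of_lt hθ1),
            min_self, hr θ]
          ring
        refine lin hEq ?_
        rw [hτ, if_pos]
        right
        exact ⟨hAneg, by rw [hΔO']; exact Real.log_lt_log h1εm hB1⟩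
      · -- 1 + ε < r θ₀, Ahat < 0 : linear
        have hev : ∀ᶠ θ in 𝓝 θ₀, 1 + ε < r θ := hcont.eventually (eventually_gt_nhds hC)
        have hEq : J =ᶠ[𝓝 θ₀] (fun θ => Ahat / pb * p θ) := by
          filter_upwards [hev] with θ hθ
          rw [hJ θ, hclip, min_eq_right (le_of_lt hθ),
            max_eq_right (by linarith : (1:ℝ) - ε ≤ 1 + ε), min_eq_left (by nlinarith),
            hr θ]
          ring
        refine lin hEq ?_
        rw [hτ, if_pos]
        right
        refine ⟨hAneg, ?_⟩
        rw [hΔO']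
        exact Real.log_lt_log h1εm (by linarith)
  · -- Ahat = 0 : J is identically 0
    have hEq : J =ᶠ[𝓝 θ₀] (fun _ => (0:ℝ)) := by
      filter_upwards with θ
      rw [hJ θ, hA0]
      simp
    refine ⟨(differentiableAt_const (0:ℝ)).congr_of_eventuallyEq hEq, ?_⟩
    rw [hEq.gradient_eq, hA0]
    simp [gradient_const]
  · -- 0 < Ahat
    rcases hne2.lt_or_gt with hA | hB1
    · -- r θ₀ < 1 - ε : linear
      have hev : ∀ᶠ θ in 𝓝 θ₀, r θ < 1 - ε := hcont.eventually (eventually_lt_nhds hA)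
      have hEq : J =ᶠ[𝓝 θ₀] (fun θ => Ahat / pb * p θ) := by
        filter_upwards [hev] with θ hθ
        rw [hJ θ, hclip, min_eq_left (by linarith : r θ ≤ 1 + ε),
          max_eq_left (le_of_lt hθ), min_eq_left (by nlinarith), hr θ]
        ring
      refine lin hEq ?_
      rw [hτ, if_pos]
      left
      refine ⟨hApos, ?_⟩
      rw [hΔO']
      exact Real.log_lt_log hr0 (by linarith)
    · rcases hne1.lt_or_gt with hB2 | hC
      · -- 1 - ε < r θ₀ < 1 + ε : linear
        have hev1 : ∀ᶠ θ in 𝓝 θ₀, 1 - ε < r θ := hcont.eventually (eventually_gt_nhds hB1)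
        have hev2 : ∀ᶠ θ in 𝓝 θ₀, r θ < 1 + ε := hcont.eventually (eventually_lt_nhds hB2)
        have hEq : J =ᶠ[𝓝 θ₀] (fun θ => Ahat / pb * p θ) := by
          filter_upwards [hev1, hev2] with θ hθ1 hθ2
          rw [hJ θ, hclip, min_eq_left (le_of_lt hθ2), max_eq_right (le_of_lt hθ1),
            min_self, hr θ]
          ring
        refine lin hEq ?_
        rw [hτ, if_pos]
        left
        exact ⟨hApos, by rw [hΔO']; exact Real.log_lt_log hr0 hB2⟩
      · -- 1 + ε < r θ₀, 0 < Ahat : J locally constant (1+ε)·Â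
        have hev : ∀ᶠ θ in 𝓝 θ₀, 1 + ε < r θ := hcont.eventually (eventually_gt_nhds hC)
        have hEq : J =ᶠ[𝓝 θ₀] (fun _ => (1 + ε) * Ahat) := by
          filter_upwards [hev] with θ hθ
          rw [hJ θ, hclip, min_eq_right (le_of_lt hθ),
            max_eq_right (by linarith : (1:ℝ) - ε ≤ 1 + ε), min_eq_right (by nlinarith)]
        refine cst _ hEq ?_
        rw [hτ]
        have hlog1 : Real.log (1 + ε) < ΔO := by
          rw [hΔO']; exact Real.log_lt_log h1εp hC
        rw [if_neg]; push_neg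
        constructor
        · intro _; linarith
        · intro h; linarith
end

section
/- (f_MLA satisfies the validity constraints.) Define f_MLA : ℝ × ℝ → ℝ by f_MLA(x,y) = −(1+x)²/2 if 1+x+y ≤ 0 < 1+x, and f_MLA(x,y) = y · max(1 + x + y/2, 0) otherwise. Then: (i) f_MLA(x, 0) = 0 for every x; (ii) for every fixed x, the map y ↦ f_MLA(x,y) is monotone nondecreasing on ℝ; (iii) y · f_MLA(x,y) ≥ 0 for all x, y. -/
/-- The numerically stable maximum-likelihood approximation scaling function. -/
noncomputable def fMLA (x y : ℝ) : ℝ :=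
  if 1 + x + y ≤ 0 ∧ 0 < 1 + x then -(1 + x) ^ 2 / 2
  else y * max (1 + x + y / 2) 0

lemma fMLA_eq (x y : ℝ) :
    fMLA x y = ((max (y + (1 + x)) (max (-(1 + x)) 0)) ^ 2 - (1 + x) ^ 2) / 2 := by
  unfold fMLA
  set a := 1 + x with ha
  split
  · rename_i h
    obtain ⟨h1, h2⟩ := h
    rw [max_eq_right (le_of_lt (neg_neg_of_pos h2)),
        max_eq_right (by linarith : y + a ≤ 0)]
    ring
  · rename_i h
    push_neg at h
    rcases le_or_gt a 0 with hle | hlt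
    · rw [max_eq_left (by linarith : (0:ℝ) ≤ -a)]
      rcases le_or_gt (a + y / 2) 0 with hy | hy
      · rw [max_eq_right hy, max_eq_right (by linarith : y + a ≤ -a)]
        ring
      · rw [max_eq_left (le_of_lt hy), max_eq_left (by linarith : -a ≤ y + a)]
        ring
    · have hy : 0 < a + y := by
        by_contra hc
        have := h (by linarith); linarith
      rw [max_eq_right (le_of_lt (neg_neg_of_pos hlt)),
          max_eq_left (by linarith : (0:ℝ) ≤ y + a),
          max_eq_left (by linarith : (0:ℝ) ≤ a + y / 2)]
      ring

/-- `f_MLA` satisfies the validity constraints on the return-error argument: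
it vanishes at `y = 0`, is nondecreasing in `y`, and `y · f_MLA(x,y) ≥ 0`. -/
theorem fMLA_valid :
    (∀ x : ℝ, fMLA x 0 = 0) ∧
    (∀ x : ℝ, Monotone fun y => fMLA x y) ∧
    (∀ x y : ℝ, 0 ≤ y * fMLA x y) := by
  refine ⟨fun x => ?_, fun x => ?_, fun x y => ?_⟩
  · unfold fMLA
    split
    · rename_i h; linarith [h.1, h.2]
    · simp
  · intro y1 y2 hy
    simp only [fMLA_eq]
    set c := max (-(1 + x)) 0 with hc
    have hc0 : (0:ℝ) ≤ c := le_max_right _ _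
    have h1 : max (y1 + (1 + x)) c ≤ max (y2 + (1 + x)) c :=
      max_le_max (by linarith) le_rfl
    have h0 : (0:ℝ) ≤ max (y1 + (1 + x)) c := le_trans hc0 (le_max_right _ _)
    have := mul_self_le_mul_self h0 h1
    nlinarith
  · unfold fMLA
    split
    · rename_i h
      obtain ⟨h1, h2⟩ := h
      have : y ≤ 0 := by linarith
      nlinarith
    · have : 0 ≤ max (1 + x + y / 2) 0 := le_max_right _ _
      rw [← mul_assoc]
      exact mul_nonneg (mul_self_nonneg y) this
end

section
/- (f_MLA monotone in the off-policy argument.) Define f_MLA : ℝ × ℝ → ℝ by f_MLA(x,y) = −(1+x)²/2 if 1+x+y ≤ 0 < 1+x, and f_MLA(x,y) = y · max(1 + x + y/2, 0) otherwise. Then for every fixed y ∈ ℝ, the map x ↦ |f_MLA(x,y)| is monotone nondecreasing on ℝ. Equivalently: if y ≥ 0 then x ↦ f_MLA(x,y) is nondecreasing and nonnegative, and if y ≤ 0 then x ↦ f_MLA(x,y) is nonincreasing and nonpositive. -/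
lemma fMLA_of_nonneg {x y : ℝ} (hy : 0 ≤ y) :
    fMLA x y = y * max (1 + x + y / 2) 0 := by
  unfold fMLA
  rw [if_neg]
  rintro ⟨h1, h2⟩
  linarith

lemma fMLA_mono_nonneg {y : ℝ} (hy : 0 ≤ y) : Monotone fun x => fMLA x y := by
  intro a b hab
  simp only [fMLA_of_nonneg hy]
  exact mul_le_mul_of_nonneg_left (max_le_max (by linarith) le_rfl) hy

lemma fMLA_nonneg {y : ℝ} (hy : 0 ≤ y) (x : ℝ) : 0 ≤ fMLA x y := by
  rw [fMLA_of_nonneg hy]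
  exact mul_nonneg hy (le_max_right _ _)

lemma fMLA_anti_nonpos {y : ℝ} (hy : y ≤ 0) : Antitone fun x => fMLA x y := by
  intro a b hab
  simp only [fMLA]
  split_ifs with h1 h2 h2
  · -- both quadratic
    nlinarith [h1.2, h2.1]
  · -- b quadratic, a linear
    push_neg at h2
    have ha : 1 + a + y ≤ 0 := by linarith [h1.1]
    have ha2 : 1 + a ≤ 0 := by
      by_contra hc
      push_neg at hc
      linarith [h2 ha]
    have hm : max (1 + a + y / 2) 0 = 0 := max_eq_right (by linarith)
    rw [hm, mul_zero]
    nlinarith [h1.2]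
  · -- a quadratic, b linear
    push_neg at h1
    have hb2 : 0 < 1 + b := by linarith [h2.2]
    have hby : 0 < 1 + b + y := lt_of_not_ge (fun h => by linarith [h1 h])
    have hyneg : y < 0 := by linarith [h2.1, h2.2]
    have hm : max (1 + b + y / 2) 0 = 1 + b + y / 2 := max_eq_left (by linarith)
    rw [hm]
    nlinarith [h2.1, h2.2]
  · -- both linear
    have := max_le_max (show 1 + a + y / 2 ≤ 1 + b + y / 2 by linarith) (le_refl (0:ℝ))
    exact mul_le_mul_of_nonpos_left this hy

lemma fMLA_nonpos {y : ℝ} (hy : y ≤ 0) (x : ℝ) : fMLA x y ≤ 0 := by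
  unfold fMLA
  split_ifs with h
  · nlinarith [h.2]
  · exact mul_nonpos_of_nonpos_of_nonneg hy (le_max_right _ _)

/-- `f_MLA` is monotone in the off-policy argument: for fixed `y`,
`x ↦ |f_MLA(x,y)|` is nondecreasing; equivalently, for `y ≥ 0` the map
`x ↦ f_MLA(x,y)` is nondecreasing and nonnegative, and for `y ≤ 0` it is
nonincreasing and nonpositive. -/
theorem fMLA_monotone_offpolicy :
    (∀ y : ℝ, Monotone fun x => |fMLA x y|) ∧
    (∀ y : ℝ, 0 ≤ y →
      (Monotone fun x => fMLA x y) ∧ ∀ x : ℝ, 0 ≤ fMLA x y) ∧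
    (∀ y : ℝ, y ≤ 0 →
      (Antitone fun x => fMLA x y) ∧ ∀ x : ℝ, fMLA x y ≤ 0) := by
  refine ⟨?_, fun y hy => ⟨fMLA_mono_nonneg hy, fMLA_nonneg hy⟩,
    fun y hy => ⟨fMLA_anti_nonpos hy, fMLA_nonpos hy⟩⟩
  intro y
  rcases le_or_gt 0 y with hy | hy
  · intro a b hab
    simp only
    rw [abs_of_nonneg (fMLA_nonneg hy a), abs_of_nonneg (fMLA_nonneg hy b)]
    exact fMLA_mono_nonneg hy hab
  · intro a b hab
    simp only
    rw [abs_of_nonpos (fMLA_nonpos hy.le a), abs_of_nonpos (fMLA_nonpos hy.le b)]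
    simpa using fMLA_anti_nonpos hy.le hab
end

section
/- (The parametric family f_{MLA(α_o, α_r)} satisfies the validity constraints.) For constants α_o ≥ 0 and α_r ≥ 0, define f(x,y) = y · max( 1 + α_o x + α_r y, max(1 + α_o x, 0)/2 ). Then: (i) f(x,0) = 0 for every x; (ii) for every fixed x, the map y ↦ f(x,y) is monotone nondecreasing on ℝ; (iii) y · f(x,y) ≥ 0 for all x, y; (iv) for every fixed y, the map x ↦ |f(x,y)| is monotone nondecreasing on ℝ. -/
/-- The parametric family `f_{MLA(α_o, α_r)}(x,y) = y · max(1 + α_o x + α_r y,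
(1 + α_o x)_+ / 2)` satisfies all the validity constraints when `α_o, α_r ≥ 0`. -/
theorem fMLA_param_valid (αo αr : ℝ) (hαo : 0 ≤ αo) (hαr : 0 ≤ αr)
    (f : ℝ → ℝ → ℝ)
    (hf : ∀ x y : ℝ,
      f x y = y * max (1 + αo * x + αr * y) (max (1 + αo * x) 0 / 2)) :
    (∀ x : ℝ, f x 0 = 0) ∧
    (∀ x : ℝ, Monotone fun y => f x y) ∧
    (∀ x y : ℝ, 0 ≤ y * f x y) ∧
    (∀ y : ℝ, Monotone fun x => |f x y|) := by
  refine ⟨fun x => by rw [hf]; ring, ?_, ?_, ?_⟩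
  · intro x y1 y2 h
    simp only
    rw [hf, hf]
    set a := 1 + αo * x with ha
    have hc : (0:ℝ) ≤ max a 0 / 2 := by positivity
    have hca : a ≤ max a 0 := le_max_left _ _
    have hr : 0 ≤ αr * (y2 - y1) := mul_nonneg hαr (by linarith)
    rcases le_total a 0 with haz | haz
    · rw [max_eq_right haz] at *
      rcases le_total (a + αr * y1) ((0:ℝ) / 2) with h1 | h1 <;>
        rcases le_total (a + αr * y2) ((0:ℝ) / 2) with h2 | h2
      · rw [max_eq_right h1, max_eq_right h2]; nlinarith
      · rw [max_eq_right h1, max_eq_left h2]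
        rcases le_total 0 y2 with hy2 | hy2
        · nlinarith [mul_nonneg hy2 (by linarith : (0:ℝ) ≤ a + αr * y2)]
        · nlinarith [mul_nonneg (neg_nonneg.2 hy2) (neg_nonneg.2 haz),
            mul_nonneg hαr (mul_self_nonneg y2)]
      · rw [max_eq_left h1, max_eq_right h2]
        have heq : a + αr * y1 = 0 := by linarith
        rw [heq]
        simp
      · rw [max_eq_left h1, max_eq_left h2]
        rcases le_total 0 y1 with hy1 | hy1
        · nlinarith [mul_nonneg hy1 hr, mul_nonneg (sub_nonneg.2 h) (by linarith : (0:ℝ) ≤ a + αr * y2)]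
        · rcases le_total 0 y2 with hy2 | hy2
          · nlinarith [mul_nonneg (neg_nonneg.2 hy1) (by linarith : (0:ℝ) ≤ a + αr * y1),
              mul_nonneg hy2 (by linarith : (0:ℝ) ≤ a + αr * y2)]
          · have hz2 : αr * y2 ≤ 0 := mul_nonpos_of_nonneg_of_nonpos hαr hy2
            have hz1 : αr * y1 ≤ 0 := mul_nonpos_of_nonneg_of_nonpos hαr hy1
            have hp2 : a + αr * y2 = 0 := le_antisymm (by linarith) (by linarith)
            have hp1 : a + αr * y1 = 0 := le_antisymm (by linarith) (by linarith)
            rw [hp1, hp2]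
            simp
    · rw [max_eq_left haz] at *
      rcases le_total (a + αr * y1) (a / 2) with h1 | h1 <;>
        rcases le_total (a + αr * y2) (a / 2) with h2 | h2
      · rw [max_eq_right h1, max_eq_right h2]; nlinarith
      · rw [max_eq_right h1, max_eq_left h2]
        rcases le_total 0 y2 with hy2 | hy2
        · nlinarith [mul_nonneg hy2 (by linarith : (0:ℝ) ≤ a + αr * y2 - a / 2),
            mul_nonneg haz (sub_nonneg.2 h)]
        · nlinarith [mul_nonneg (by linarith : (0:ℝ) ≤ a / 2 + αr * y2) (sub_nonneg.2 h),
            mul_nonneg (neg_nonneg.2 hy2) (by linarith : (0:ℝ) ≤ -(a / 2) - αr * y1)]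
      · rw [max_eq_left h1, max_eq_right h2]
        have heq : a + αr * y1 = a / 2 := by linarith
        have h3 : y1 * (a + αr * y1) = y1 * (a / 2) := by rw [heq]
        nlinarith [mul_nonneg (sub_nonneg.2 h) hc]
      · rw [max_eq_left h1, max_eq_left h2]
        rcases le_total 0 y2 with hy2 | hy2
        · nlinarith [mul_nonneg hy2 (by linarith : (0:ℝ) ≤ a + αr * y2 - a / 2),
            mul_nonneg haz (sub_nonneg.2 h),
            mul_nonneg hy2 (by linarith : (0:ℝ) ≤ a + αr * y1 - a / 2),
            mul_nonneg hαr (mul_self_nonneg y2), mul_nonneg hr hr]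
        · nlinarith [mul_nonneg (by linarith : (0:ℝ) ≤ a / 2 + αr * y2) (sub_nonneg.2 h),
            mul_nonneg (neg_nonneg.2 hy2) (by linarith : (0:ℝ) ≤ a / 2 + αr * y1),
            mul_nonneg hr hr, mul_nonneg hαr (mul_self_nonneg y2)]
  · intro x y
    rw [hf]
    have h0 : (0:ℝ) ≤ max (1 + αo * x + αr * y) (max (1 + αo * x) 0 / 2) :=
      le_trans (by positivity) (le_max_right _ _)
    nlinarith [sq_nonneg y]
  · intro y x1 x2 h
    simp only
    rw [hf, hf]
    have h1 : (0:ℝ) ≤ max (1 + αo * x1 + αr * y) (max (1 + αo * x1) 0 / 2) :=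
      le_trans (by positivity) (le_max_right _ _)
    have haux : 1 + αo * x1 ≤ 1 + αo * x2 := by nlinarith
    have h12 : max (1 + αo * x1 + αr * y) (max (1 + αo * x1) 0 / 2) ≤
        max (1 + αo * x2 + αr * y) (max (1 + αo * x2) 0 / 2) := by
      apply max_le_max (by linarith)
      have : max (1 + αo * x1) 0 ≤ max (1 + αo * x2) 0 := max_le_max haux le_rfl
      linarith
    rw [abs_mul, abs_mul, abs_of_nonneg h1, abs_of_nonneg (le_trans h1 h12)]
    exact mul_le_mul_of_nonneg_left h12 (abs_nonneg y)
end

section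
/- (Monotonicity characterization of the unfixed approximation.) Define f₀(x,y) = y · max(1 + x + y/2, 0). Then for each fixed x ∈ ℝ, the map y ↦ f₀(x,y) is monotone nondecreasing on ℝ if and only if 1 + x ≤ 0. In particular, if 1 + x > 0 then there exist y₁ < y₂ with f₀(x, y₁) > f₀(x, y₂). -/
/-- Monotonicity characterization of the unfixed approximation
`f₀(x,y) = y · max (1 + x + y/2) 0`: it is nondecreasing in `y` iff `1 + x ≤ 0`;
in particular when `1 + x > 0` monotonicity fails at some pair `y₁ < y₂`. -/
theorem f0_monotone_iff (x : ℝ) :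
    ((Monotone fun y : ℝ => y * max (1 + x + y / 2) 0) ↔ 1 + x ≤ 0) ∧
    (0 < 1 + x → ∃ y₁ y₂ : ℝ, y₁ < y₂ ∧
      y₂ * max (1 + x + y₂ / 2) 0 < y₁ * max (1 + x + y₁ / 2) 0) := by
  have key : 0 < 1 + x → ∃ y₁ y₂ : ℝ, y₁ < y₂ ∧
      y₂ * max (1 + x + y₂ / 2) 0 < y₁ * max (1 + x + y₁ / 2) 0 := by
    intro h
    refine ⟨-2 * (1 + x) - 1, -(1 + x), by linarith, ?_⟩
    have h1 : max (1 + x + (-2 * (1 + x) - 1) / 2) 0 = 0 := by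
      rw [max_eq_right]; linarith
    have h2 : max (1 + x + -(1 + x) / 2) 0 = (1 + x) / 2 := by
      rw [max_eq_left] <;> linarith
    rw [h1, h2]; nlinarith
  refine ⟨⟨fun hmono => ?_, fun hx y₁ y₂ hle => ?_⟩, key⟩
  · by_contra hc
    push_neg at hc
    obtain ⟨y₁, y₂, hlt, hf⟩ := key hc
    exact absurd (hmono hlt.le) (not_le.mpr hf)
  · simp only
    by_cases h1 : 1 + x + y₁ / 2 ≤ 0
    · rw [max_eq_right h1]
      rcases le_or_gt (1 + x + y₂ / 2) 0 with h2 | h2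
      · rw [max_eq_right h2]; simp
      · rw [max_eq_left h2.le]
        nlinarith
    · push_neg at h1
      have h2 : 0 < 1 + x + y₂ / 2 := by linarith
      rw [max_eq_left h1.le, max_eq_left h2.le]
      nlinarith
end
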